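/- arXiv:1802.04077 — 2 statements merged into one kernel-verified Lean document; each statement's English description precedes it below -/
import Mathlib

section
/- Let α be a real number with α ∉ ℤ. The sequence (c^{(n)})_{n=−1}^∞ is a Schauder basis of c(Δ^(α)): every x ∈ c(Δ^(α)) has the representation x = ξ·c^{(−1)} + ∑_{n=0}^∞ ((Δ^(α)x)_n − ξ)·c^{(n)}, where ξ = lim_{n→∞} (Δ^(α)x)_n, the series converging in the norm ‖x‖ = sup_m |(Δ^(α)x)_m|, and this is the unique representation of x as a norm-convergent series λ_{−1} c^{(−1)} + ∑_{n≥0} λ_n c^{(n)} with real scalars. -/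
open Filter Finset Topology

/-- The fractional difference matrix `Δ^(α)`. -/
noncomputable def fracDelta (α : ℝ) (n k : ℕ) : ℝ :=
  if k ≤ n then
    (-1 : ℝ) ^ (n - k) * Real.Gamma (α + 1) /
      ((Nat.factorial (n - k) : ℝ) * Real.Gamma (α - n + k + 1))
  else 0

/-- `(Δ^(α)x)_n = ∑_{k=0}^n Δ^(α)_{nk} x_k`. -/
noncomputable def fracDeltaSeq (α : ℝ) (x : ℕ → ℝ) (n : ℕ) : ℝ :=
  ∑ k ∈ Finset.range (n + 1), fracDelta α n k * x k

/-- Membership in `c(Δ^(α))`. -/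
def memCDelta (α : ℝ) (x : ℕ → ℝ) : Prop :=
  ∃ L : ℝ, Tendsto (fracDeltaSeq α x) atTop (nhds L)

/-- The norm `‖x‖ = sup_m |(Δ^(α)x)_m|`. -/
noncomputable def deltaNorm (α : ℝ) (x : ℕ → ℝ) : ℝ :=
  ⨆ m, |fracDeltaSeq α x m|

/-- The basis sequence `c^{(n)}` for `n ≥ 0` (the `n`-th column of `Δ^(−α)`). -/
noncomputable def cBasis (α : ℝ) (n k : ℕ) : ℝ := fracDelta (-α) k n

/-- The basis sequence `c^{(−1)}`:
`c^{(−1)}_k = ∑_{n=0}^{k} (−1)^{k−n} Γ(−α+1)/((k−n)!·Γ(−α+n−k+1))`. -/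
noncomputable def cBasisNegOne (α : ℝ) (k : ℕ) : ℝ :=
  ∑ n ∈ Finset.range (k + 1), fracDelta (-α) k n

lemma descPoch_succ_smeval (α : ℝ) (j : ℕ) :
    (descPochhammer ℤ (j+1)).smeval α = (descPochhammer ℤ j).smeval α * (α - j) := by
  rw [descPochhammer_succ_right, Polynomial.smeval_mul]
  simp [Polynomial.smeval_sub, Polynomial.smeval_X, Polynomial.smeval_natCast]

lemma gamma_ratio (α : ℝ) (hα : ∀ m : ℤ, α ≠ (m : ℝ)) (j : ℕ) :
    Real.Gamma (α + 1) = (descPochhammer ℤ j).smeval α * Real.Gamma (α - j + 1) := by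
  induction j with
  | zero => simp
  | succ j ih =>
    have hj : α - (j : ℝ) ≠ 0 := by
      have := hα (j : ℤ)
      intro h
      apply this
      push_cast
      linarith
    have h1 : α - ((j : ℕ) : ℝ) + 1 = (α - (((j+1) : ℕ) : ℝ) + 1) + 1 := by push_cast; ring
    have h2 : α - (((j+1) : ℕ) : ℝ) + 1 = α - j := by push_cast; ring
    rw [ih, h1, h2, Real.Gamma_add_one hj, descPoch_succ_smeval]
    ring

lemma gamma_ne (α : ℝ) (hα : ∀ m : ℤ, α ≠ (m : ℝ)) (j : ℕ) :
    Real.Gamma (α - j + 1) ≠ 0 := by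
  refine Real.Gamma_ne_zero fun m => ?_
  intro h
  apply hα ((j : ℤ) - 1 - (m : ℤ))
  push_cast
  linarith

lemma fracDelta_eq (α : ℝ) (hα : ∀ m : ℤ, α ≠ (m : ℝ)) {n k : ℕ} (h : k ≤ n) :
    fracDelta α n k = (-1 : ℝ) ^ (n - k) * Ring.choose α (n - k) := by
  set j := n - k with hj
  have hcast : α - (n : ℝ) + (k : ℝ) = α - (j : ℝ) := by
    rw [hj, Nat.cast_sub h]; ring
  have hG := gamma_ne α hα j
  have hfac : ((Nat.factorial j : ℕ) : ℝ) ≠ 0 := Nat.cast_ne_zero.mpr (Nat.factorial_ne_zero j)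
  have hsm : (descPochhammer ℤ j).smeval α = (Nat.factorial j : ℝ) * Ring.choose α j := by
    rw [Ring.descPochhammer_eq_factorial_smul_choose, nsmul_eq_mul]
  rw [fracDelta, if_pos h, hcast, gamma_ratio α hα j, hsm]
  field_simp
  ring

lemma hα_neg (α : ℝ) (hα : ∀ m : ℤ, α ≠ (m : ℝ)) : ∀ m : ℤ, -α ≠ (m : ℝ) := by
  intro m h
  apply hα (-m)
  push_cast
  linarith

lemma key_orth (α : ℝ) (hα : ∀ m : ℤ, α ≠ (m : ℝ)) (m n : ℕ) :
    ∑ k ∈ Finset.range (m+1), fracDelta α m k * fracDelta (-α) k n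
      = if m = n then 1 else 0 := by
  by_cases hnm : n ≤ m
  · set d := m - n with hd
    have hsplit : ∑ k ∈ Finset.range (m+1), fracDelta α m k * fracDelta (-α) k n
        = ∑ i ∈ Finset.range (d+1), fracDelta α m (n+i) * fracDelta (-α) (n+i) n := by
      rw [Finset.range_eq_Ico,
        ← Finset.sum_Ico_consecutive _ (Nat.zero_le n) (by omega : n ≤ m+1)]
      have h1 : ∑ k ∈ Finset.Ico 0 n, fracDelta α m k * fracDelta (-α) k n = 0 := by
        refine Finset.sum_eq_zero fun k hk => ?_
        have : ¬ n ≤ k := by simp only [Finset.mem_Ico] at hk; omega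
        simp [fracDelta, this]
      rw [h1, zero_add, Finset.sum_Ico_eq_sum_range]
      have : m + 1 - n = d + 1 := by omega
      rw [this, Finset.range_eq_Ico]
    rw [hsplit]
    have hterm : ∀ i ∈ Finset.range (d+1),
        fracDelta α m (n+i) * fracDelta (-α) (n+i) n
          = (-1 : ℝ) ^ d * (Ring.choose (-α) i * Ring.choose α (d - i)) := by
      intro i hi
      have hi' : i ≤ d := by simpa [Nat.lt_succ_iff] using hi
      have h1 : n + i ≤ m := by omega
      rw [fracDelta_eq α hα h1, fracDelta_eq (-α) (hα_neg α hα) (Nat.le_add_right n i)]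
      have e1 : m - (n + i) = d - i := by omega
      have e2 : n + i - n = i := by omega
      rw [e1, e2]
      have : (-1 : ℝ) ^ (d - i) * (-1 : ℝ) ^ i = (-1 : ℝ) ^ d := by
        rw [← pow_add]
        congr 1
        omega
      calc (-1:ℝ) ^ (d-i) * Ring.choose α (d-i) * ((-1:ℝ)^i * Ring.choose (-α) i)
          = ((-1:ℝ)^(d-i) * (-1:ℝ)^i) * (Ring.choose (-α) i * Ring.choose α (d-i)) := by ring
        _ = _ := by rw [this]
    rw [Finset.sum_congr rfl hterm, ← Finset.mul_sum]
    have hvdm : ∑ i ∈ Finset.range (d+1), Ring.choose (-α) i * Ring.choose α (d - i)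
        = if d = 0 then 1 else 0 := by
      have := Ring.add_choose_eq (R := ℝ) (r := -α) (s := α) d (Commute.all _ _)
      rw [Finset.Nat.sum_antidiagonal_eq_sum_range_succ_mk] at this
      rw [← this]
      have h0 : (-α) + α = ((0 : ℕ) : ℝ) := by simp
      rw [h0, Ring.choose_natCast]
      cases d with
      | zero => simp
      | succ d => simp [Nat.choose_eq_zero_of_lt]
    rw [hvdm]
    by_cases hmn : m = n
    · have : d = 0 := by omega
      simp [this, hmn]
    · have : d ≠ 0 := by omega
      simp [this, hmn]
  · have hz : ∀ k ∈ Finset.range (m+1), fracDelta α m k * fracDelta (-α) k n = 0 := by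
      intro k hk
      have hk' : k < m + 1 := Finset.mem_range.mp hk
      have : ¬ n ≤ k := by omega
      simp [fracDelta, this]
    rw [Finset.sum_eq_zero hz]
    have : m ≠ n := by omega
    simp [this]

lemma seq_cBasis (α : ℝ) (hα : ∀ m : ℤ, α ≠ (m : ℝ)) (n m : ℕ) :
    fracDeltaSeq α (fun k => cBasis α n k) m = if m = n then 1 else 0 := by
  rw [fracDeltaSeq]
  simpa [cBasis] using key_orth α hα m n

lemma seq_cNegOne (α : ℝ) (hα : ∀ m : ℤ, α ≠ (m : ℝ)) (m : ℕ) :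
    fracDeltaSeq α (cBasisNegOne α) m = 1 := by
  rw [fracDeltaSeq]
  have hext : ∀ k ∈ Finset.range (m+1),
      fracDelta α m k * cBasisNegOne α k
        = ∑ n ∈ Finset.range (m+1), fracDelta α m k * fracDelta (-α) k n := by
    intro k hk
    have hk' : k < m + 1 := Finset.mem_range.mp hk
    rw [cBasisNegOne, Finset.mul_sum]
    refine Finset.sum_subset ?_ ?_
    · exact Finset.range_subset_range.mpr (by omega)
    · intro n _ hn
      have : ¬ n ≤ k := by
        simp only [Finset.mem_range] at hn
        omega
      simp [fracDelta, this]
  rw [Finset.sum_congr rfl hext, Finset.sum_comm]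
  have : ∀ n ∈ Finset.range (m+1),
      ∑ k ∈ Finset.range (m+1), fracDelta α m k * fracDelta (-α) k n
        = if m = n then 1 else 0 := fun n _ => key_orth α hα m n
  rw [Finset.sum_congr rfl this]
  simp

lemma seq_lin (α : ℝ) (x c : ℕ → ℝ) (b : ℕ → ℕ → ℝ) (lneg : ℝ) (l : ℕ → ℝ) (m k : ℕ) :
    fracDeltaSeq α (x - fun j => lneg * c j + ∑ n ∈ Finset.range m, l n * b n j) k
      = fracDeltaSeq α x k - lneg * fracDeltaSeq α c k
        - ∑ n ∈ Finset.range m, l n * fracDeltaSeq α (b n) k := by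
  simp only [fracDeltaSeq, Pi.sub_apply]
  have h1 : ∀ i ∈ Finset.range (k+1),
      fracDelta α k i * (x i - (lneg * c i + ∑ n ∈ Finset.range m, l n * b n i))
      = fracDelta α k i * x i - lneg * (fracDelta α k i * c i)
        - ∑ n ∈ Finset.range m, l n * (fracDelta α k i * b n i) := by
    intro i _
    rw [mul_sub, mul_add, Finset.mul_sum,
      Finset.sum_congr rfl
        (fun n _ => by ring :
          ∀ n ∈ Finset.range m,
            fracDelta α k i * (l n * b n i) = l n * (fracDelta α k i * b n i))]
    ring
  rw [Finset.sum_congr rfl h1, Finset.sum_sub_distrib, Finset.sum_sub_distrib,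
    ← Finset.mul_sum, Finset.sum_comm]
  congr 1
  exact Finset.sum_congr rfl fun n _ => (Finset.mul_sum _ _ _).symm

lemma main_calc (α : ℝ) (hα : ∀ m : ℤ, α ≠ (m : ℝ)) (x : ℕ → ℝ) (lneg : ℝ) (l : ℕ → ℝ)
    (m k : ℕ) :
    fracDeltaSeq α
      (x - fun j => lneg * cBasisNegOne α j + ∑ n ∈ Finset.range m, l n * cBasis α n j) k
    = fracDeltaSeq α x k - lneg - (if k < m then l k else 0) := by
  rw [seq_lin α x (cBasisNegOne α) (cBasis α) lneg l m k, seq_cNegOne α hα, mul_one]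
  have : ∑ n ∈ Finset.range m, l n * fracDeltaSeq α (cBasis α n) k
      = if k < m then l k else 0 := by
    have h : ∀ n ∈ Finset.range m, l n * fracDeltaSeq α (cBasis α n) k
        = if k = n then l n else 0 := by
      intro n _
      rw [show fracDeltaSeq α (cBasis α n) k = if k = n then 1 else 0 from seq_cBasis α hα n k]
      split <;> simp
    rw [Finset.sum_congr rfl h, Finset.sum_ite_eq]
    simp [Finset.mem_range]
  rw [this]

/-- `(c^{(n)})_{n=−1}^∞` is a Schauder basis of `c(Δ^(α))`: every `x ∈ c(Δ^(α))`
has the unique representation `x = ξ c^{(−1)} + ∑_{n≥0} ((Δ^(α)x)_n − ξ) c^{(n)}`,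
where `ξ = lim_n (Δ^(α)x)_n`. -/
theorem schauder_basis_cDelta (α : ℝ) (hα : ∀ m : ℤ, α ≠ (m : ℝ)) :
    memCDelta α (cBasisNegOne α) ∧
    (∀ n : ℕ, memCDelta α (fun k => cBasis α n k)) ∧
    ∀ x : ℕ → ℝ, memCDelta α x →
      ∀ ξ : ℝ, Tendsto (fracDeltaSeq α x) atTop (nhds ξ) →
        (Tendsto
          (fun m => deltaNorm α
            (x - fun j => ξ * cBasisNegOne α j +
              ∑ n ∈ Finset.range m, (fracDeltaSeq α x n - ξ) * cBasis α n j))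
          atTop (nhds 0)) ∧
        (∀ (lneg : ℝ) (l : ℕ → ℝ),
          Tendsto
            (fun m => deltaNorm α
              (x - fun j => lneg * cBasisNegOne α j +
                ∑ n ∈ Finset.range m, l n * cBasis α n j))
            atTop (nhds 0) →
          lneg = ξ ∧ l = fun n => fracDeltaSeq α x n - ξ) := by
  refine ⟨⟨1, ?_⟩, fun n => ⟨0, ?_⟩, ?_⟩
  · have : fracDeltaSeq α (cBasisNegOne α) = fun _ => 1 :=
      funext fun m => seq_cNegOne α hα m
    rw [this]
    exact tendsto_const_nhds
  · refine Tendsto.congr' ?_ (tendsto_const_nhds (x := (0:ℝ)))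
    filter_upwards [eventually_ge_atTop (n+1)] with m hm
    rw [seq_cBasis α hα]
    have : m ≠ n := by omega
    simp [this]
  · intro x _ ξ hξ
    set a := fracDeltaSeq α x with ha
    constructor
    · -- existence: norm tends to 0
      rw [Metric.tendsto_atTop]
      intro ε hε
      obtain ⟨N, hN⟩ := (Metric.tendsto_atTop.mp hξ) (ε/2) (half_pos hε)
      refine ⟨N, fun m hm => ?_⟩
      have hcalc : ∀ k, fracDeltaSeq α
          (x - fun j => ξ * cBasisNegOne α j +
            ∑ n ∈ Finset.range m, (fracDeltaSeq α x n - ξ) * cBasis α n j) k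
          = if k < m then 0 else a k - ξ := by
        intro k
        rw [main_calc α hα x ξ (fun n => a n - ξ) m k]
        by_cases h : k < m <;> simp [h, ha]
      have hbd : ∀ k, |fracDeltaSeq α
          (x - fun j => ξ * cBasisNegOne α j +
            ∑ n ∈ Finset.range m, (fracDeltaSeq α x n - ξ) * cBasis α n j) k| ≤ ε/2 := by
        intro k
        rw [hcalc k]
        by_cases h : k < m
        · simp [h]; linarith
        · rw [if_neg h]
          have hk : N ≤ k := by omega
          have := hN k hk
          rw [Real.dist_eq] at this
          exact le_of_lt this
      have h1 : deltaNorm α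
          (x - fun j => ξ * cBasisNegOne α j +
            ∑ n ∈ Finset.range m, (fracDeltaSeq α x n - ξ) * cBasis α n j) ≤ ε/2 :=
        Real.iSup_le hbd (le_of_lt (half_pos hε))
      have h2 : 0 ≤ deltaNorm α
          (x - fun j => ξ * cBasisNegOne α j +
            ∑ n ∈ Finset.range m, (fracDeltaSeq α x n - ξ) * cBasis α n j) :=
        Real.iSup_nonneg fun k => abs_nonneg _
      rw [Real.dist_eq]
      rw [abs_of_nonneg (by linarith)]
      linarith
    · -- uniqueness
      intro lneg l hD
      set D := fun m => deltaNorm α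
          (x - fun j => lneg * cBasisNegOne α j +
            ∑ n ∈ Finset.range m, l n * cBasis α n j) with hDdef
      -- boundedness of |a|
      obtain ⟨C, hC⟩ : ∃ C, ∀ k, |a k| ≤ C := by
        have habs : Tendsto (fun k => |a k|) atTop (nhds |ξ|) := hξ.abs
        obtain ⟨C, hC⟩ := habs.bddAbove_range
        exact ⟨C, fun k => hC (Set.mem_range_self k)⟩
      have hBdd : ∀ m, BddAbove (Set.range fun k => |fracDeltaSeq α
          (x - fun j => lneg * cBasisNegOne α j +
            ∑ n ∈ Finset.range m, l n * cBasis α n j) k|) := by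
        intro m
        refine ⟨C + |lneg| + ∑ n ∈ Finset.range m, |l n|, ?_⟩
        rintro _ ⟨k, rfl⟩
        dsimp only
        rw [main_calc α hα x lneg l m k]
        have h1 : |a k - lneg - (if k < m then l k else 0)|
            ≤ |a k| + |lneg| + |if k < m then l k else 0| := by
          calc |a k - lneg - (if k < m then l k else 0)|
              ≤ |a k - lneg| + |if k < m then l k else 0| := abs_sub _ _
            _ ≤ (|a k| + |lneg|) + |if k < m then l k else 0| := by
                gcongr; exact abs_sub _ _
        have h2 : |if k < m then l k else 0| ≤ ∑ n ∈ Finset.range m, |l n| := by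
          by_cases h : k < m
          · rw [if_pos h]
            exact Finset.single_le_sum (fun n _ => abs_nonneg (l n))
              (Finset.mem_range.mpr h)
          · rw [if_neg h, abs_zero]
            exact Finset.sum_nonneg fun n _ => abs_nonneg (l n)
        have := hC k
        calc |a k - lneg - (if k < m then l k else 0)|
            ≤ |a k| + |lneg| + |if k < m then l k else 0| := h1
          _ ≤ C + |lneg| + ∑ n ∈ Finset.range m, |l n| := by gcongr
      have hle : ∀ m k, |a k - lneg - (if k < m then l k else 0)| ≤ D m := by
        intro m k
        have := le_ciSup (hBdd m) k
        rwa [main_calc α hα x lneg l m k] at this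
      -- lneg = ξ
      have hlneg : lneg = ξ := by
        have hstep : ∀ m, |ξ - lneg| ≤ D m := by
          intro m
          have htnd : Tendsto (fun k => |a k - lneg|) atTop (nhds |ξ - lneg|) :=
            (hξ.sub_const lneg).abs
          refine le_of_tendsto htnd ?_
          filter_upwards [eventually_ge_atTop m] with k hk
          have h := hle m k
          rw [if_neg (by omega)] at h
          simpa using h
        have h0 : |ξ - lneg| ≤ 0 := ge_of_tendsto hD (Eventually.of_forall hstep)
        have h1 : ξ - lneg = 0 := abs_eq_zero.mp (le_antisymm h0 (abs_nonneg _))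
        linarith
      have hl : ∀ k, l k = a k - lneg := by
        intro k
        have hstep : ∀ m, m ≥ k + 1 → |a k - lneg - l k| ≤ D m := by
          intro m hm
          have h := hle m k
          rwa [if_pos (by omega)] at h
        have : |a k - lneg - l k| ≤ 0 :=
          ge_of_tendsto hD (eventually_atTop.mpr ⟨k+1, hstep⟩)
        have h0 : a k - lneg - l k = 0 := abs_nonpos_iff.mp this
        linarith
      exact ⟨hlneg, funext fun k => by rw [hl k, hlneg]⟩
end

section
/- Let α be a real number with α ∉ ℤ. The space ℓ∞(Δ^(α)) has no Schauder basis: there is no sequence (b_n)_{n=0}^∞ of elements of ℓ∞(Δ^(α)) such that every x ∈ ℓ∞(Δ^(α)) admits a unique sequence of real scalars (λ_n) with x = ∑_{n=0}^∞ λ_n b_n, the series converging in the norm ‖x‖ = sup_m |(Δ^(α)x)_m|. -/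
open Filter Finset Topology

/-- Membership in `ℓ∞(Δ^(α))`. -/
def memLinfDelta (α : ℝ) (x : ℕ → ℝ) : Prop :=
  ∃ C : ℝ, ∀ n, |fracDeltaSeq α x n| ≤ C

/-- The formal inverse of the triangular matrix `Δ^(α)` (with unit diagonal),
applied to a target sequence `t`. -/
noncomputable def invDelta (α : ℝ) (t : ℕ → ℝ) : ℕ → ℝ
  | n => t n - ∑ k ∈ (Finset.range n).attach,
      fracDelta α n (k : ℕ) * invDelta α t k
  termination_by n => n
  decreasing_by exact Finset.mem_range.mp k.2

lemma fracDeltaSeq_sub (α : ℝ) (x y : ℕ → ℝ) (n : ℕ) :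
    fracDeltaSeq α (x - y) n = fracDeltaSeq α x n - fracDeltaSeq α y n := by
  simp [fracDeltaSeq, mul_sub, Finset.sum_sub_distrib]

lemma fracDeltaSeq_sum {ι : Type*} (α : ℝ) (F : Finset ι) (c : ι → ℝ) (b : ι → ℕ → ℝ) (n : ℕ) :
    fracDeltaSeq α (fun j => ∑ i ∈ F, c i * b i j) n
      = ∑ i ∈ F, c i * fracDeltaSeq α (b i) n := by
  simp only [fracDeltaSeq, Finset.mul_sum]
  rw [Finset.sum_comm]
  exact Finset.sum_congr rfl fun i _ =>
    Finset.sum_congr rfl fun k _ => by ring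

lemma fracDelta_diag (α : ℝ) (hα : ∀ m : ℤ, α ≠ (m : ℝ)) (n : ℕ) :
    fracDelta α n n = 1 := by
  have hΓ : Real.Gamma (α + 1) ≠ 0 := by
    apply Real.Gamma_ne_zero
    intro m h
    exact hα (-(m + 1)) (by push_cast; linarith)
  simp only [fracDelta, le_refl, if_true, Nat.sub_self, pow_zero, Nat.factorial_zero,
    Nat.cast_one, one_mul, sub_add_cancel]
  exact div_self hΓ

lemma invDelta_spec (α : ℝ) (hα : ∀ m : ℤ, α ≠ (m : ℝ)) (t : ℕ → ℝ) (n : ℕ) :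
    fracDeltaSeq α (invDelta α t) n = t n := by
  rw [fracDeltaSeq, Finset.sum_range_succ, fracDelta_diag α hα, one_mul]
  conv_lhs => rw [invDelta]
  rw [Finset.sum_attach (Finset.range n) (fun k => fracDelta α n k * invDelta α t k)]
  ring

/-- The space `ℓ∞(Δ^(α))` has no Schauder basis. -/
theorem no_schauder_basis_linfDelta (α : ℝ) (hα : ∀ m : ℤ, α ≠ (m : ℝ)) :
    ¬ ∃ b : ℕ → (ℕ → ℝ), (∀ n, memLinfDelta α (b n)) ∧
      ∀ x : ℕ → ℝ, memLinfDelta α x →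
        ∃! l : ℕ → ℝ,
          Tendsto
            (fun m => deltaNorm α (x - fun j => ∑ n ∈ Finset.range m, l n * b n j))
            atTop (nhds 0) := by
  rintro ⟨b, hb, hbasis⟩
  choose C hC using hb
  have hC0 : ∀ i, 0 ≤ C i := fun i => (abs_nonneg _).trans (hC i 0)
  -- key: every "indicator-type" element of the space is within 1/2 of a rational
  -- finite combination of the `b n`
  have key : ∀ s : ℕ → Bool, ∃ i : (Σ m : ℕ, Fin m → ℚ),
      ∀ n, |(if s n then (1:ℝ) else 0) -
        fracDeltaSeq α (fun j => ∑ k : Fin i.1, ((i.2 k : ℝ)) * b k j) n| < 1/2 := by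
    intro s
    set t : ℕ → ℝ := fun n => if s n then (1:ℝ) else 0 with ht
    set xs : ℕ → ℝ := invDelta α t with hxs
    have hDxs : ∀ n, fracDeltaSeq α xs n = t n := invDelta_spec α hα t
    have hmem : memLinfDelta α xs := by
      refine ⟨1, fun n => ?_⟩
      rw [hDxs]
      simp only [ht]
      split <;> norm_num
    obtain ⟨l, hl, -⟩ := hbasis xs hmem
    obtain ⟨m, hm⟩ : ∃ m, deltaNorm α
        (xs - fun j => ∑ n ∈ Finset.range m, l n * b n j) < 1/4 :=
      ((tendsto_order.1 hl).2 (1/4) (by norm_num)).exists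
    set P : ℕ → ℝ := fun j => ∑ n ∈ Finset.range m, l n * b n j with hP
    have hDP : ∀ n, fracDeltaSeq α P n = ∑ i ∈ Finset.range m, l i * fracDeltaSeq α (b i) n :=
      fun n => fracDeltaSeq_sum α (Finset.range m) l b n
    -- the remainder is in the space, so its sup is a real bound
    have hbdd : BddAbove (Set.range fun n => |fracDeltaSeq α (xs - P) n|) := by
      refine ⟨1 + ∑ i ∈ Finset.range m, |l i| * C i, ?_⟩
      rintro _ ⟨n, rfl⟩
      show |fracDeltaSeq α (xs - P) n| ≤ _
      rw [fracDeltaSeq_sub, hDxs, hDP]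
      calc |t n - ∑ i ∈ Finset.range m, l i * fracDeltaSeq α (b i) n|
          ≤ |t n| + |∑ i ∈ Finset.range m, l i * fracDeltaSeq α (b i) n| := abs_sub _ _
        _ ≤ 1 + ∑ i ∈ Finset.range m, |l i| * C i := by
            gcongr
            · simp only [ht]; split <;> norm_num
            · refine (Finset.abs_sum_le_sum_abs _ _).trans ?_
              refine Finset.sum_le_sum fun i _ => ?_
              rw [abs_mul]
              exact mul_le_mul_of_nonneg_left (hC i n) (abs_nonneg _)
    have hnear : ∀ n, |t n - fracDeltaSeq α P n| < 1/4 := by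
      intro n
      have h1 : |fracDeltaSeq α (xs - P) n| ≤ deltaNorm α (xs - P) := le_ciSup hbdd n
      have h2 : |fracDeltaSeq α (xs - P) n| < 1/4 := lt_of_le_of_lt h1 hm
      rwa [fracDeltaSeq_sub, hDxs] at h2
    -- approximate the coefficients by rationals
    have hq : ∀ i : Fin m, ∃ q : ℚ, |l i - (q:ℝ)| < 1/(4*(m+1)*(C i + 1)) := by
      intro i
      apply exists_rat_near
      have h1 : (0:ℝ) < C i + 1 := by linarith [hC0 i]
      have h2 : (0:ℝ) < 4*(m+1) := by positivity
      positivity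
    choose q hq using hq
    refine ⟨⟨m, q⟩, fun n => ?_⟩
    have hQ : fracDeltaSeq α (fun j => ∑ k : Fin m, ((q k : ℝ)) * b k j) n
        = ∑ k : Fin m, (q k : ℝ) * fracDeltaSeq α (b k) n :=
      fracDeltaSeq_sum α Finset.univ (fun k : Fin m => (q k : ℝ)) (fun k => b k) n
    have hDPfin : fracDeltaSeq α P n = ∑ k : Fin m, l k * fracDeltaSeq α (b k) n := by
      rw [hDP, Finset.sum_range fun i => l i * fracDeltaSeq α (b i) n]
    have hPQ : |fracDeltaSeq α P n
        - fracDeltaSeq α (fun j => ∑ k : Fin m, ((q k : ℝ)) * b k j) n| ≤ 1/4 := by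
      rw [hQ, hDPfin, ← Finset.sum_sub_distrib]
      have : ∀ k : Fin m,
          |l k * fracDeltaSeq α (b k) n - (q k : ℝ) * fracDeltaSeq α (b k) n|
            ≤ 1/(4*(m+1)) := by
        intro k
        rw [← sub_mul, abs_mul]
        have h1 : |l k - (q k : ℝ)| ≤ 1/(4*(m+1)*(C k + 1)) := (hq k).le
        have h2 : |fracDeltaSeq α (b k) n| ≤ C k := hC k n
        have hck : (0:ℝ) ≤ C k := hC0 k
        have hm1 : (0:ℝ) < 4*(m+1) := by positivity
        calc |l k - (q k : ℝ)| * |fracDeltaSeq α (b k) n|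
            ≤ (1/(4*(m+1)*(C k + 1))) * C k := by
              gcongr
          _ ≤ 1/(4*(m+1)) := by
              rw [div_mul_eq_mul_div, one_mul, div_le_div_iff₀ (by positivity) hm1]
              nlinarith
      calc |∑ k : Fin m, (l k * fracDeltaSeq α (b k) n - (q k : ℝ) * fracDeltaSeq α (b k) n)|
          ≤ ∑ k : Fin m, |l k * fracDeltaSeq α (b k) n - (q k : ℝ) * fracDeltaSeq α (b k) n| :=
            Finset.abs_sum_le_sum_abs _ _
        _ ≤ ∑ _k : Fin m, (1/(4*((m:ℝ)+1))) := Finset.sum_le_sum fun k _ => this k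
        _ = (m:ℝ) * (1/(4*((m:ℝ)+1))) := by simp [mul_comm]
        _ ≤ 1/4 := by
            rw [mul_one_div, div_le_div_iff₀ (by positivity) (by norm_num)]
            push_cast
            nlinarith [Nat.cast_nonneg (α := ℝ) m]
    calc |t n - fracDeltaSeq α (fun j => ∑ k : Fin m, ((q k : ℝ)) * b k j) n|
        ≤ |t n - fracDeltaSeq α P n| + |fracDeltaSeq α P n
            - fracDeltaSeq α (fun j => ∑ k : Fin m, ((q k : ℝ)) * b k j) n| := by
          have := abs_sub_le (t n) (fracDeltaSeq α P n)
            (fracDeltaSeq α (fun j => ∑ k : Fin m, ((q k : ℝ)) * b k j) n)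
          linarith [this]
      _ < 1/2 := by linarith [hnear n, hPQ]
  choose F hF using key
  have Finj : Function.Injective F := by
    intro s s' h
    funext n
    by_contra hn
    have h1 := hF s n
    have h2 := hF s' n
    rw [h] at h1
    have : |(if s n then (1:ℝ) else 0) - (if s' n then (1:ℝ) else 0)| < 1 := by
      have := abs_sub_le ((if s n then (1:ℝ) else 0))
        (fracDeltaSeq α (fun j => ∑ k : Fin (F s').1, (((F s').2 k : ℝ)) * b k j) n)
        ((if s' n then (1:ℝ) else 0))
      rw [abs_sub_comm] at h2
      linarith
    cases hs : s n <;> cases hs' : s' n <;> rw [hs, hs'] at this hn <;> simp_all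
  have : Countable (ℕ → Bool) := Finj.countable
  obtain ⟨g, hg⟩ := exists_surjective_nat (ℕ → Bool)
  obtain ⟨n, hn⟩ := hg (fun n => !(g n n))
  have := congrFun hn n
  simp at this
end
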